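/- If G acts on a set X, A ⊆ G and Y ⊆ X are nonempty with Y finite, and |A · Y| = |Y|, then the subgroup H generated by A⁻¹A satisfies H ⊆ G_Y, the stabilizer of Y (i.e., every element of H maps Y onto Y). -/
import Mathlib


open Pointwise

/-- If `|A · Y| = |Y|` then the subgroup generated by `A⁻¹A` stabilizes `Y`. -/
theorem stmt_0 {G X : Type*} [Group G] [MulAction G X]
    (A : Set G) (Y : Finset X) (hA : A.Nonempty) (hY : Y.Nonempty)
    (hcard : (A • (Y : Set X)).ncard = Y.card) :
    ∀ g ∈ Subgroup.closure {g : G | ∃ a ∈ A, ∃ b ∈ A, g = a⁻¹ * b},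
      g • (Y : Set X) = (Y : Set X) := by
  have hYfin : (Y : Set X).Finite := Y.finite_toSet
  have hpos : 0 < Y.card := Finset.card_pos.mpr hY
  have hSfin : (A • (Y : Set X)).Finite := by
    by_contra h
    rw [Set.Infinite.ncard h] at hcard
    omega
  have key : ∀ a ∈ A, a • (Y : Set X) = A • (Y : Set X) := by
    intro a ha
    apply Set.eq_of_subset_of_ncard_le
    · exact Set.smul_set_subset_smul ha
    · rw [hcard, Set.ncard_smul_set]
      simp [Set.ncard_coe_finset]
    · exact hSfin
  have gen : ∀ g ∈ {g : G | ∃ a ∈ A, ∃ b ∈ A, g = a⁻¹ * b},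
      g • (Y : Set X) = (Y : Set X) := by
    rintro g ⟨a, ha, b, hb, rfl⟩
    rw [mul_smul, key b hb, ← key a ha, inv_smul_smul]
  intro g hg
  have : Subgroup.closure {g : G | ∃ a ∈ A, ∃ b ∈ A, g = a⁻¹ * b}
      ≤ MulAction.stabilizer G (Y : Set X) := by
    rw [Subgroup.closure_le]
    intro x hx
    exact gen x hx
  exact this hg
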